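/- Let (x*, y*) be the unconstrained solution and (x_p*, y_p*) ∈ X × Y the constrained solution. Suppose U_Xᵀ A_ff U_X and U_Yᵀ A_ss U_Y are invertible, set c1 := U_X (U_Xᵀ A_ff U_X)^{-1} U_Xᵀ, c5 := U_Y (U_Yᵀ A_ss U_Y)^{-1} U_Yᵀ, m_x := σ_min(U_Xᵀ A_ff U_X), m̃_y := σ_min(U_Yᵀ A_ss U_Y), and suppose I − c1 A_fs c5 A_sf is invertible with κ := ‖(I − c1 A_fs c5 A_sf)^{-1}‖₂. Then x_p* − x* = (I − c1 A_fs c5 A_sf)^{-1}[(I − c1 A_ff)(Π_X x* − x*) − c1 A_fs (I − c5 A_ss)(Π_Y y* − y*)], and consequently ‖x_p* − x*‖² ≤ 2κ²(1 + ‖A_ff‖₂/m_x)² ε_x² + 2κ²(‖A_fs‖₂/m_x)²(1 + ‖A_ss‖₂/m̃_y)² ε_y², where ε_x := ‖Π_X x* − x*‖ and ε_y := ‖Π_Y y* − y*‖. -/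

import Mathlib

open Matrix MeasureTheory Finset
open scoped BigOperators

noncomputable section
namespace TTSA

abbrev E (n : ℕ) : Type := EuclideanSpace ℝ (Fin n)

def mv {k l : ℕ} (M : Matrix (Fin k) (Fin l) ℝ) (x : E l) : E k :=
  Matrix.toEuclideanLin M x

def specNorm {k l : ℕ} (M : Matrix (Fin k) (Fin l) ℝ) : ℝ :=
  ‖LinearMap.toContinuousLinearMap (Matrix.toEuclideanLin M)‖

def sigmaMin {k : ℕ} (M : Matrix (Fin k) (Fin k) ℝ) : ℝ :=
  sInf ((fun v : E k => ‖mv M v‖) '' {v | ‖v‖ = 1})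

def resolvent {k l : ℕ} (U : Matrix (Fin k) (Fin l) ℝ) (A : Matrix (Fin k) (Fin k) ℝ) :
    Matrix (Fin k) (Fin k) ℝ :=
  U * (Uᵀ * A * U)⁻¹ * Uᵀ


lemma mv_mul {k l p : ℕ} (M : Matrix (Fin k) (Fin l) ℝ) (N : Matrix (Fin l) (Fin p) ℝ)
    (x : E p) : mv (M * N) x = mv M (mv N x) := by
  simp [mv, Matrix.toEuclideanLin_apply, Matrix.mulVec_mulVec]

lemma mv_one {k : ℕ} (x : E k) : mv (1 : Matrix (Fin k) (Fin k) ℝ) x = x := by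
  simp [mv, Matrix.toEuclideanLin_apply, Matrix.one_mulVec]

lemma mv_smat_sub {k l : ℕ} (M N : Matrix (Fin k) (Fin l) ℝ) (x : E l) :
    mv (M - N) x = mv M x - mv N x := by
  unfold mv; rw [map_sub]; rfl

lemma mv_add {k l : ℕ} (M : Matrix (Fin k) (Fin l) ℝ) (x y : E l) :
    mv M (x + y) = mv M x + mv M y := by
  unfold mv; exact map_add _ _ _

lemma mv_sub {k l : ℕ} (M : Matrix (Fin k) (Fin l) ℝ) (x y : E l) :
    mv M (x - y) = mv M x - mv M y := by
  unfold mv; exact map_sub _ _ _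

lemma mv_zero {k l : ℕ} (M : Matrix (Fin k) (Fin l) ℝ) : mv M (0 : E l) = 0 := by
  unfold mv; exact map_zero _

lemma mv_smul {k l : ℕ} (M : Matrix (Fin k) (Fin l) ℝ) (c : ℝ) (x : E l) :
    mv M (c • x) = c • mv M x := by
  unfold mv; exact map_smul _ _ _

lemma norm_mv_le {k l : ℕ} (M : Matrix (Fin k) (Fin l) ℝ) (x : E l) :
    ‖mv M x‖ ≤ specNorm M * ‖x‖ :=
  (LinearMap.toContinuousLinearMap (Matrix.toEuclideanLin M)).le_opNorm x

lemma specNorm_nonneg {k l : ℕ} (M : Matrix (Fin k) (Fin l) ℝ) : 0 ≤ specNorm M :=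
  norm_nonneg _

lemma specNorm_le_bound {k l : ℕ} (M : Matrix (Fin k) (Fin l) ℝ) {c : ℝ} (hc : 0 ≤ c)
    (h : ∀ x, ‖mv M x‖ ≤ c * ‖x‖) : specNorm M ≤ c :=
  ContinuousLinearMap.opNorm_le_bound _ hc h

lemma mv_transpose_adjoint {k l : ℕ} (M : Matrix (Fin k) (Fin l) ℝ) (x : E l) (y : E k) :
    inner ℝ (mv M x) y = inner ℝ x (mv Mᵀ y) := by
  have h : Mᵀ = Mᴴ := by ext i j; simp [Matrix.conjTranspose_apply]
  rw [h]
  unfold mv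
  rw [Matrix.toEuclideanLin_conjTranspose_eq_adjoint]
  exact (LinearMap.adjoint_inner_right _ _ _).symm

lemma norm_mv_isometry {k l : ℕ} {U : Matrix (Fin k) (Fin l) ℝ} (hU : Uᵀ * U = 1)
    (x : E l) : ‖mv U x‖ = ‖x‖ := by
  have h : inner ℝ (mv U x) (mv U x) = inner ℝ x x := by
    rw [mv_transpose_adjoint, ← mv_mul, hU, mv_one]
  have := congrArg Real.sqrt h
  rwa [real_inner_self_eq_norm_sq, real_inner_self_eq_norm_sq,
    Real.sqrt_sq (norm_nonneg _), Real.sqrt_sq (norm_nonneg _)] at this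

lemma norm_mv_transpose_le {k l : ℕ} {U : Matrix (Fin k) (Fin l) ℝ} (hU : Uᵀ * U = 1)
    (z : E k) : ‖mv Uᵀ z‖ ≤ ‖z‖ := by
  have h : ‖mv Uᵀ z‖ ^ 2 = inner ℝ (mv U (mv Uᵀ z)) z := by
    rw [mv_transpose_adjoint, ← real_inner_self_eq_norm_sq]
  have h2 : inner ℝ (mv U (mv Uᵀ z)) z ≤ ‖mv U (mv Uᵀ z)‖ * ‖z‖ := real_inner_le_norm _ _
  rw [norm_mv_isometry hU] at h2
  nlinarith [norm_nonneg (mv Uᵀ z), norm_nonneg z]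


lemma sigmaMin_nonneg {k : ℕ} (M : Matrix (Fin k) (Fin k) ℝ) : 0 ≤ sigmaMin M :=
  Real.sInf_nonneg (by rintro x ⟨v, -, rfl⟩; exact norm_nonneg _)

lemma sigmaMin_mul_le {k : ℕ} (M : Matrix (Fin k) (Fin k) ℝ) (v : E k) :
    sigmaMin M * ‖v‖ ≤ ‖mv M v‖ := by
  rcases eq_or_ne v 0 with rfl | hv
  · simp [mv_zero]
  · have hn : ‖v‖ ≠ 0 := norm_ne_zero_iff.mpr hv
    set u : E k := ‖v‖⁻¹ • v with hu
    have hu1 : ‖u‖ = 1 := by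
      rw [hu, norm_smul]; simp [abs_of_nonneg (inv_nonneg.mpr (norm_nonneg v)),
        inv_mul_cancel₀ hn]
    have hmem : ‖mv M u‖ ∈ ((fun v : E k => ‖mv M v‖) '' {v | ‖v‖ = 1}) :=
      ⟨u, hu1, rfl⟩
    have hbdd : BddBelow ((fun v : E k => ‖mv M v‖) '' {v | ‖v‖ = 1}) :=
      ⟨0, by rintro x ⟨w, -, rfl⟩; exact norm_nonneg _⟩
    have h1 : sigmaMin M ≤ ‖mv M u‖ := csInf_le hbdd hmem
    have h2 : ‖mv M u‖ = ‖v‖⁻¹ * ‖mv M v‖ := by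
      rw [hu, mv_smul, norm_smul]; simp [abs_of_nonneg (inv_nonneg.mpr (norm_nonneg v))]
    rw [h2] at h1
    have := mul_le_mul_of_nonneg_right h1 (norm_nonneg v)
    calc sigmaMin M * ‖v‖ ≤ ‖v‖⁻¹ * ‖mv M v‖ * ‖v‖ := this
      _ = ‖mv M v‖ := by field_simp

lemma sigmaMin_pos {k : ℕ} (hk : 0 < k) {M : Matrix (Fin k) (Fin k) ℝ}
    (hM : IsUnit M) : 0 < sigmaMin M := by
  have hS : ({v : E k | ‖v‖ = 1} : Set (E k)) = Metric.sphere 0 1 := by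
    ext v; simp [mem_sphere_zero_iff_norm]
  have hcompact : IsCompact ({v : E k | ‖v‖ = 1} : Set (E k)) := by
    rw [hS]; exact isCompact_sphere 0 1
  have hne : ({v : E k | ‖v‖ = 1} : Set (E k)).Nonempty := by
    refine ⟨EuclideanSpace.single ⟨0, hk⟩ (1 : ℝ), ?_⟩
    simp [EuclideanSpace.norm_single]
  have hcont : ContinuousOn (fun v : E k => ‖mv M v‖) {v | ‖v‖ = 1} :=
    (Continuous.norm ((LinearMap.toContinuousLinearMap
      (Matrix.toEuclideanLin M)).continuous)).continuousOn
  obtain ⟨v0, hv0, hmin⟩ := hcompact.exists_isMinOn hne hcont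
  have hv0pos : 0 < ‖mv M v0‖ := by
    rcases eq_or_ne (mv M v0) 0 with h0 | h0
    · exfalso
      have : v0 = 0 := by
        have := congrArg (mv M⁻¹) h0
        rwa [← mv_mul, Matrix.nonsing_inv_mul M (((Matrix.isUnit_iff_isUnit_det M).mp hM)),
          mv_one, mv_zero] at this
      rw [Set.mem_setOf_eq, this, norm_zero] at hv0
      norm_num at hv0
    · exact norm_pos_iff.mpr h0
  have : ‖mv M v0‖ ≤ sigmaMin M := by
    apply le_csInf (hne.image _)
    rintro b ⟨w, hw, rfl⟩
    exact hmin hw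
  linarith

lemma resolvent_mv_norm_le {k l : ℕ} (U : Matrix (Fin k) (Fin l) ℝ)
    (A : Matrix (Fin k) (Fin k) ℝ) (hU : Uᵀ * U = 1) (hA : IsUnit (Uᵀ * A * U)) (z : E k) :
    ‖mv (resolvent U A) z‖ ≤ (1 / sigmaMin (Uᵀ * A * U)) * ‖z‖ := by
  rcases Nat.eq_zero_or_pos l with rfl | hl
  · have hR : resolvent U A = 0 := by
      have hUT : Uᵀ = 0 := by ext i j; exact i.elim0
      simp [resolvent, hUT]
    have hs : sigmaMin (Uᵀ * A * U) = 0 := by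
      have : ((fun v : E 0 => ‖mv (Uᵀ * A * U) v‖) '' {v | ‖v‖ = 1}) = ∅ := by
        ext x
        simp only [Set.mem_image, Set.mem_setOf_eq, Set.mem_empty_iff_false, iff_false]
        rintro ⟨v, hv, -⟩
        have : v = 0 := Subsingleton.elim _ _
        rw [this, norm_zero] at hv; norm_num at hv
      rw [sigmaMin, this, Real.sInf_empty]
    rw [hR, hs]
    simp [mv, Matrix.toEuclideanLin_apply]
  · have hm : 0 < sigmaMin (Uᵀ * A * U) := sigmaMin_pos hl hA
    set B := Uᵀ * A * U with hB
    have hexp : mv (resolvent U A) z = mv U (mv B⁻¹ (mv Uᵀ z)) := by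
      rw [resolvent, mv_mul, mv_mul]
    rw [hexp, norm_mv_isometry hU]
    set w := mv Uᵀ z with hw
    have h1 : sigmaMin B * ‖mv B⁻¹ w‖ ≤ ‖mv B (mv B⁻¹ w)‖ := sigmaMin_mul_le _ _
    have h2 : mv B (mv B⁻¹ w) = w := by
      rw [← mv_mul, Matrix.mul_nonsing_inv B (((Matrix.isUnit_iff_isUnit_det B).mp hA)), mv_one]
    rw [h2] at h1
    have h3 : ‖w‖ ≤ ‖z‖ := norm_mv_transpose_le hU z
    rw [div_mul_eq_mul_div, one_mul, le_div_iff₀ hm, mul_comm]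
    linarith

lemma specNorm_resolvent_le {k l : ℕ} (U : Matrix (Fin k) (Fin l) ℝ)
    (A : Matrix (Fin k) (Fin k) ℝ) (hU : Uᵀ * U = 1) (hA : IsUnit (Uᵀ * A * U)) :
    specNorm (resolvent U A) ≤ 1 / sigmaMin (Uᵀ * A * U) :=
  specNorm_le_bound _ (one_div_nonneg.mpr (sigmaMin_nonneg _))
    (resolvent_mv_norm_le U A hU hA)

lemma specNorm_one_le {k : ℕ} : specNorm (1 : Matrix (Fin k) (Fin k) ℝ) ≤ 1 :=
  specNorm_le_bound _ zero_le_one (fun x => by rw [mv_one, one_mul])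


lemma resolvent_proj {k l : ℕ} (U : Matrix (Fin k) (Fin l) ℝ) (A : Matrix (Fin k) (Fin k) ℝ)
    (hU : Uᵀ * U = 1) : resolvent U A * (U * Uᵀ) = resolvent U A := by
  simp only [resolvent, Matrix.mul_assoc]
  rw [← Matrix.mul_assoc Uᵀ U Uᵀ, hU, Matrix.one_mul]

lemma resolvent_mul_proj {k l : ℕ} (U : Matrix (Fin k) (Fin l) ℝ)
    (A : Matrix (Fin k) (Fin k) ℝ) (hU : Uᵀ * U = 1) (hA : IsUnit (Uᵀ * A * U)) :
    resolvent U A * A * (U * Uᵀ) = U * Uᵀ := by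
  have hinv : (Uᵀ * A * U)⁻¹ * (Uᵀ * A * U) = 1 :=
    Matrix.nonsing_inv_mul _ ((Matrix.isUnit_iff_isUnit_det _).mp hA)
  calc resolvent U A * A * (U * Uᵀ)
      = U * ((Uᵀ * A * U)⁻¹ * ((Uᵀ * A * U) * Uᵀ)) := by
        simp only [resolvent, Matrix.mul_assoc]
    _ = U * Uᵀ := by rw [← Matrix.mul_assoc ((Uᵀ * A * U)⁻¹), hinv, Matrix.one_mul]

lemma block_eq {k k' l : ℕ} (U : Matrix (Fin k) (Fin l) ℝ) (A : Matrix (Fin k) (Fin k) ℝ)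
    (C : Matrix (Fin k) (Fin k') ℝ) (b : E k) (hU : Uᵀ * U = 1) (hA : IsUnit (Uᵀ * A * U))
    (p : E k) (q : E k') (hp : p ∈ Set.range (mv U))
    (hsol : mv (U * Uᵀ) (mv A p + mv C q - b) = 0) :
    p = mv (resolvent U A) b - mv (resolvent U A * C) q := by
  have hPp : mv (U * Uᵀ) p = p := by
    obtain ⟨a, rfl⟩ := hp
    rw [← mv_mul, Matrix.mul_assoc, hU, Matrix.mul_one]
  have h0 : mv (resolvent U A) (mv A p + mv C q - b) = 0 := by
    conv_lhs => rw [← resolvent_proj U A hU]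
    rw [mv_mul, hsol, mv_zero]
  have hAp : mv (resolvent U A) (mv A p) = p := by
    rw [← mv_mul, ← hPp, ← mv_mul, resolvent_mul_proj U A hU hA]
  rw [mv_sub, mv_add, hAp] at h0
  rw [mv_mul, eq_sub_iff_add_eq, ← sub_eq_zero]
  exact h0

lemma proj_absorb_left {k l : ℕ} (U : Matrix (Fin k) (Fin l) ℝ)
    (A : Matrix (Fin k) (Fin k) ℝ) (hU : Uᵀ * U = 1) (hA : IsUnit (Uᵀ * A * U)) (x : E k) :
    mv (1 - resolvent U A * A) (mv (U * Uᵀ) x - x) = mv (resolvent U A * A) x - x := by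
  rw [mv_smat_sub, mv_one, mv_sub (resolvent U A * A), ← mv_mul,
    resolvent_mul_proj U A hU hA]
  abel



lemma one_sub_res_bound {k l : ℕ} (U : Matrix (Fin k) (Fin l) ℝ)
    (A : Matrix (Fin k) (Fin k) ℝ) (hU : Uᵀ * U = 1) (hA : IsUnit (Uᵀ * A * U)) (w : E k) :
    ‖mv (1 - resolvent U A * A) w‖ ≤ (1 + specNorm A / sigmaMin (Uᵀ * A * U)) * ‖w‖ := by
  rw [mv_smat_sub, mv_one]
  have h1' : ‖mv (resolvent U A * A) w‖ ≤ (1 / sigmaMin (Uᵀ * A * U)) * (specNorm A * ‖w‖) := by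
    rw [mv_mul]
    calc ‖mv (resolvent U A) (mv A w)‖
        ≤ (1 / sigmaMin (Uᵀ * A * U)) * ‖mv A w‖ := resolvent_mv_norm_le U A hU hA _
      _ ≤ (1 / sigmaMin (Uᵀ * A * U)) * (specNorm A * ‖w‖) :=
          mul_le_mul_of_nonneg_left (norm_mv_le _ _)
            (one_div_nonneg.mpr (sigmaMin_nonneg _))
  have h2' : ‖w - mv (resolvent U A * A) w‖ ≤ ‖w‖ + ‖mv (resolvent U A * A) w‖ :=
    norm_sub_le _ _
  have h3' : (1 / sigmaMin (Uᵀ * A * U)) * (specNorm A * ‖w‖) =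
      specNorm A / sigmaMin (Uᵀ * A * U) * ‖w‖ := by ring
  have h4' : (1 + specNorm A / sigmaMin (Uᵀ * A * U)) * ‖w‖ =
      ‖w‖ + specNorm A / sigmaMin (Uᵀ * A * U) * ‖w‖ := by ring
  linarith

/-- closed-form approximation error for the fast component after
eliminating the cross-term, and the resulting bound in terms of the
best-approximation errors `ε_x = ‖Π_X x* - x*‖`, `ε_y = ‖Π_Y y* - y*‖`.
Here `c1 = resolvent U_X A_ff`, `c5 = resolvent U_Y A_ss`,
`m_x = σ_min(U_Xᵀ A_ff U_X)`, `m̃_y = σ_min(U_Yᵀ A_ss U_Y)`, and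
`κ = ‖(I - c1 A_fs c5 A_sf)⁻¹‖₂`. -/
theorem fast_approximation_error_bound {n m d r : ℕ}
    (Aff : Matrix (Fin n) (Fin n) ℝ) (Afs : Matrix (Fin n) (Fin m) ℝ)
    (Asf : Matrix (Fin m) (Fin n) ℝ) (Ass : Matrix (Fin m) (Fin m) ℝ)
    (b1 : E n) (b2 : E m)
    (UX : Matrix (Fin n) (Fin d) ℝ) (UY : Matrix (Fin m) (Fin r) ℝ)
    (hUX : UXᵀ * UX = 1) (hUY : UYᵀ * UY = 1)
    (xs : E n) (ys : E m)
    (hxs : mv Aff xs + mv Afs ys = b1) (hys : mv Asf xs + mv Ass ys = b2)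
    (xp : E n) (yp : E m)
    (hxp : xp ∈ Set.range (mv UX)) (hyp : yp ∈ Set.range (mv UY))
    (hsolx : mv (UX * UXᵀ) (mv Aff xp + mv Afs yp - b1) = 0)
    (hsoly : mv (UY * UYᵀ) (mv Asf xp + mv Ass yp - b2) = 0)
    (h1 : IsUnit (UXᵀ * Aff * UX)) (h5 : IsUnit (UYᵀ * Ass * UY))
    (hcoup : IsUnit ((1 : Matrix (Fin n) (Fin n) ℝ) -
      resolvent UX Aff * Afs * resolvent UY Ass * Asf)) :
    xp - xs =
      mv ((1 - resolvent UX Aff * Afs * resolvent UY Ass * Asf)⁻¹)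
        (mv (1 - resolvent UX Aff * Aff) (mv (UX * UXᵀ) xs - xs) -
         mv (resolvent UX Aff * Afs * (1 - resolvent UY Ass * Ass))
           (mv (UY * UYᵀ) ys - ys)) ∧
    ‖xp - xs‖ ^ 2 ≤
      2 * specNorm ((1 - resolvent UX Aff * Afs * resolvent UY Ass * Asf)⁻¹) ^ 2 *
        (1 + specNorm Aff / sigmaMin (UXᵀ * Aff * UX)) ^ 2 *
        ‖mv (UX * UXᵀ) xs - xs‖ ^ 2 +
      2 * specNorm ((1 - resolvent UX Aff * Afs * resolvent UY Ass * Asf)⁻¹) ^ 2 *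
        (specNorm Afs / sigmaMin (UXᵀ * Aff * UX)) ^ 2 *
        (1 + specNorm Ass / sigmaMin (UYᵀ * Ass * UY)) ^ 2 *
        ‖mv (UY * UYᵀ) ys - ys‖ ^ 2 := by
  -- abbreviations
  have E1 : xp = mv (resolvent UX Aff * Aff) xs + mv (resolvent UX Aff * Afs) ys -
      mv (resolvent UX Aff * Afs) yp := by
    have h := block_eq UX Aff Afs b1 hUX h1 xp yp hxp hsolx
    rw [← hxs, mv_add, ← mv_mul, ← mv_mul] at h
    rw [h]
  have E2 : yp = mv (resolvent UY Ass * Asf) xs + mv (resolvent UY Ass * Ass) ys -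
      mv (resolvent UY Ass * Asf) xp := by
    have h := block_eq UY Ass Asf b2 hUY h5 yp xp hyp (by
      have hcomm : mv Ass yp + mv Asf xp - b2 = mv Asf xp + mv Ass yp - b2 := by abel
      rw [hcomm]; exact hsoly)
    rw [← hys, mv_add, ← mv_mul, ← mv_mul] at h
    rw [h]
  have hxpxs : xp - xs = (mv (resolvent UX Aff * Aff) xs - xs) -
      mv (resolvent UX Aff * Afs) (yp - ys) := by
    rw [mv_sub]
    conv_lhs => rw [E1]
    abel
  have hyp2 : mv (resolvent UY Ass * Asf) (xp - xs) =
      (mv (resolvent UY Ass * Ass) ys - ys) - (yp - ys) := by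
    rw [mv_sub]
    conv_rhs => rw [E2]
    abel
  have hKassoc : resolvent UX Aff * Afs * resolvent UY Ass * Asf =
      (resolvent UX Aff * Afs) * (resolvent UY Ass * Asf) := by
    rw [Matrix.mul_assoc]
  have hKey : mv (1 - resolvent UX Aff * Afs * resolvent UY Ass * Asf) (xp - xs) =
      mv (1 - resolvent UX Aff * Aff) (mv (UX * UXᵀ) xs - xs) -
      mv (resolvent UX Aff * Afs * (1 - resolvent UY Ass * Ass)) (mv (UY * UYᵀ) ys - ys) := by
    have t1 : mv (1 - resolvent UX Aff * Aff) (mv (UX * UXᵀ) xs - xs) =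
        mv (resolvent UX Aff * Aff) xs - xs := proj_absorb_left UX Aff hUX h1 xs
    have t2 : mv (resolvent UX Aff * Afs * (1 - resolvent UY Ass * Ass))
        (mv (UY * UYᵀ) ys - ys) =
        mv (resolvent UX Aff * Afs) (mv (resolvent UY Ass * Ass) ys - ys) := by
      rw [mv_mul, proj_absorb_left UY Ass hUY h5 ys]
    rw [t1, t2]
    calc mv (1 - resolvent UX Aff * Afs * resolvent UY Ass * Asf) (xp - xs)
        = (xp - xs) - mv (resolvent UX Aff * Afs)
            (mv (resolvent UY Ass * Asf) (xp - xs)) := by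
          rw [mv_smat_sub, mv_one, hKassoc, mv_mul]
      _ = ((mv (resolvent UX Aff * Aff) xs - xs) -
            mv (resolvent UX Aff * Afs) (yp - ys)) -
          mv (resolvent UX Aff * Afs)
            ((mv (resolvent UY Ass * Ass) ys - ys) - (yp - ys)) := by
          rw [hyp2, ← hxpxs]
      _ = (mv (resolvent UX Aff * Aff) xs - xs) -
          mv (resolvent UX Aff * Afs) (mv (resolvent UY Ass * Ass) ys - ys) := by
          simp only [mv_sub]; abel
  have hdet : IsUnit ((1 - resolvent UX Aff * Afs * resolvent UY Ass * Asf) :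
      Matrix (Fin n) (Fin n) ℝ).det := (Matrix.isUnit_iff_isUnit_det _).mp hcoup
  have hident : xp - xs =
      mv ((1 - resolvent UX Aff * Afs * resolvent UY Ass * Asf)⁻¹)
        (mv (1 - resolvent UX Aff * Aff) (mv (UX * UXᵀ) xs - xs) -
         mv (resolvent UX Aff * Afs * (1 - resolvent UY Ass * Ass))
           (mv (UY * UYᵀ) ys - ys)) := by
    rw [← hKey, ← mv_mul, Matrix.nonsing_inv_mul _ hdet, mv_one]
  refine ⟨hident, ?_⟩
  -- quantitative bound
  set κ := specNorm ((1 - resolvent UX Aff * Afs * resolvent UY Ass * Asf)⁻¹) with hκ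
  set mx := sigmaMin (UXᵀ * Aff * UX) with hmx
  set my := sigmaMin (UYᵀ * Ass * UY) with hmy
  set wx := mv (UX * UXᵀ) xs - xs with hwx
  set wy := mv (UY * UYᵀ) ys - ys with hwy
  set a : ℝ := 1 + specNorm Aff / mx with ha
  set b : ℝ := specNorm Afs / mx * (1 + specNorm Ass / my) with hb
  have hκ0 : 0 ≤ κ := specNorm_nonneg _
  have hmx0 : 0 ≤ 1 / mx := one_div_nonneg.mpr (sigmaMin_nonneg _)
  have ha0 : 0 ≤ a := by
    have := div_nonneg (specNorm_nonneg Aff) (sigmaMin_nonneg (UXᵀ * Aff * UX))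
    rw [ha]; rw [hmx]; linarith
  have hb0 : 0 ≤ b := by
    have h01 := div_nonneg (specNorm_nonneg Afs) (sigmaMin_nonneg (UXᵀ * Aff * UX))
    have h02 := div_nonneg (specNorm_nonneg Ass) (sigmaMin_nonneg (UYᵀ * Ass * UY))
    rw [hb, hmx, hmy]
    have : (0:ℝ) ≤ 1 + specNorm Ass / sigmaMin (UYᵀ * Ass * UY) := by linarith
    exact mul_nonneg h01 this
  have hu : ‖mv (1 - resolvent UX Aff * Aff) wx‖ ≤ a * ‖wx‖ :=
    one_sub_res_bound UX Aff hUX h1 wx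
  have hv : ‖mv (resolvent UX Aff * Afs * (1 - resolvent UY Ass * Ass)) wy‖ ≤ b * ‖wy‖ := by
    have hass : resolvent UX Aff * Afs * (1 - resolvent UY Ass * Ass) =
        resolvent UX Aff * (Afs * (1 - resolvent UY Ass * Ass)) := Matrix.mul_assoc _ _ _
    rw [hass, mv_mul, mv_mul]
    have hinner : ‖mv (1 - resolvent UY Ass * Ass) wy‖ ≤
        (1 + specNorm Ass / my) * ‖wy‖ := one_sub_res_bound UY Ass hUY h5 wy
    have hin0 : (0:ℝ) ≤ 1 + specNorm Ass / my := by
      have := div_nonneg (specNorm_nonneg Ass) (sigmaMin_nonneg (UYᵀ * Ass * UY))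
      rw [hmy]; linarith
    calc ‖mv (resolvent UX Aff) (mv Afs (mv (1 - resolvent UY Ass * Ass) wy))‖
        ≤ (1 / mx) * ‖mv Afs (mv (1 - resolvent UY Ass * Ass) wy)‖ :=
          resolvent_mv_norm_le UX Aff hUX h1 _
      _ ≤ (1 / mx) * (specNorm Afs * ‖mv (1 - resolvent UY Ass * Ass) wy‖) :=
          mul_le_mul_of_nonneg_left (norm_mv_le _ _) hmx0
      _ ≤ (1 / mx) * (specNorm Afs * ((1 + specNorm Ass / my) * ‖wy‖)) := by
          apply mul_le_mul_of_nonneg_left _ hmx0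
          exact mul_le_mul_of_nonneg_left hinner (specNorm_nonneg _)
      _ = b * ‖wy‖ := by rw [hb]; ring
  have hbig : ‖xp - xs‖ ≤ κ * (a * ‖wx‖ + b * ‖wy‖) := by
    rw [hident]
    calc ‖mv ((1 - resolvent UX Aff * Afs * resolvent UY Ass * Asf)⁻¹)
          (mv (1 - resolvent UX Aff * Aff) wx -
           mv (resolvent UX Aff * Afs * (1 - resolvent UY Ass * Ass)) wy)‖
        ≤ κ * ‖mv (1 - resolvent UX Aff * Aff) wx -
            mv (resolvent UX Aff * Afs * (1 - resolvent UY Ass * Ass)) wy‖ :=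
          norm_mv_le _ _
      _ ≤ κ * (‖mv (1 - resolvent UX Aff * Aff) wx‖ +
            ‖mv (resolvent UX Aff * Afs * (1 - resolvent UY Ass * Ass)) wy‖) :=
          mul_le_mul_of_nonneg_left (norm_sub_le _ _) hκ0
      _ ≤ κ * (a * ‖wx‖ + b * ‖wy‖) :=
          mul_le_mul_of_nonneg_left (add_le_add hu hv) hκ0
  have hsq : ‖xp - xs‖ ^ 2 ≤ (κ * (a * ‖wx‖ + b * ‖wy‖)) ^ 2 :=
    pow_le_pow_left₀ (norm_nonneg _) hbig 2
  have key : ‖xp - xs‖ ^ 2 ≤ 2 * κ ^ 2 * a ^ 2 * ‖wx‖ ^ 2 + 2 * κ ^ 2 * b ^ 2 * ‖wy‖ ^ 2 := by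
    clear E1 E2 hxpxs hyp2 hKassoc hKey hdet hident hu hv hbig hsolx hsoly hcoup hxs hys hxp hyp
    clear_value κ mx my wx wy a b
    nlinarith [hsq, ha0, hb0, hκ0, norm_nonneg wx, norm_nonneg wy,
      mul_nonneg (sq_nonneg κ) (sq_nonneg (a * ‖wx‖ - b * ‖wy‖))]
  refine le_trans key (le_of_eq ?_)
  rw [hb]; ring

end TTSA
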